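/- Let X_P be a regular curve in ℂ with unit tangent T satisfying T'(φ) = i·h(φ)·T(φ), h real and nonzero, and let κ(φ) = h(φ)/|X_P'(φ)| be its curvature. Fix α ∈ [0, π/2). The envelope of the family of lines X = X_P(φ) + μ·T(φ)·e^{±iα} (μ ∈ ℝ), i.e. the lines through X_P(φ) making constant angle ±α with the tangent, is the base curve X_B±(φ) = X_P(φ) ± (sin α / κ(φ))·T(φ)·e^{±iα}. -/

import Mathlib

noncomputable def ext (A B : ℂ) : ℂ :=
  Complex.I / 2 * (A * (starRingEnd ℂ) B - (starRingEnd ℂ) A * B)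

/-- The envelope of the lines through `X_P(φ)` making constant angle `±α` with the
tangent is the base curve `X_B±(φ) = X_P(φ) ± (sin α / κ(φ))·T(φ)·e^{±iα}`. -/
theorem base_curve_envelope
    (X_P T : ℝ → ℂ) (h κ : ℝ → ℝ) (α ε : ℝ)
    (hε : ε = 1 ∨ ε = -1)
    (hα : 0 ≤ α ∧ α < Real.pi / 2)
    (hreg : ∀ t, deriv X_P t ≠ 0)
    (hT : ∀ t, T t = deriv X_P t / ((‖deriv X_P t‖ : ℝ) : ℂ))
    (hT' : ∀ t, HasDerivAt T (Complex.I * (h t : ℂ) * T t) t)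
    (hh : ∀ t, h t ≠ 0)
    (hκ : ∀ t, κ t = h t / ‖deriv X_P t‖)
    (A B : ℝ → ℂ)
    (hA : ∀ t, A t = X_P t + T t * Complex.exp ((ε : ℂ) * α * Complex.I))
    (hB : ∀ t, B t = X_P t)
    (φ : ℝ) :
    ∀ X : ℂ,
      (ext (A φ - B φ) X = ext (A φ) (B φ) ∧
       ext (deriv (fun t => A t - B t) φ) X = deriv (fun t => ext (A t) (B t)) φ) ↔
      X = X_P φ + (ε : ℂ) * ((Real.sin α / κ φ : ℝ) : ℂ) * T φ *
            Complex.exp ((ε : ℂ) * α * Complex.I) := by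
  intro X
  set E : ℂ := Complex.exp ((ε : ℂ) * α * Complex.I) with hE
  have hXPdiff : DifferentiableAt ℝ X_P φ := by
    by_contra hc; exact hreg φ (deriv_zero_of_not_differentiableAt hc)
  set D : ℂ := deriv X_P φ with hD
  have hXP : HasDerivAt X_P D φ := hXPdiff.hasDerivAt
  set r : ℝ := ‖D‖ with hr
  have hr0 : r ≠ 0 := by simp [hr, hD, hreg φ]
  -- derivative computations
  have hdAB : deriv (fun t => A t - B t) φ = Complex.I * (h φ : ℂ) * T φ * E := by
    have heq : (fun t => A t - B t) = fun t => T t * E := by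
      funext t; rw [hA t, hB t]; ring
    rw [heq]; exact ((hT' φ).mul_const E).deriv
  have hAd : HasDerivAt (fun t => X_P t + T t * E)
      (D + Complex.I * (h φ : ℂ) * T φ * E) φ := hXP.add ((hT' φ).mul_const E)
  have hdext : deriv (fun t => ext (A t) (B t)) φ =
      Complex.I / 2 *
        ((D + Complex.I * (h φ : ℂ) * T φ * E) * star (X_P φ)
          + (X_P φ + T φ * E) * star D
          - (star (D + Complex.I * (h φ : ℂ) * T φ * E) * X_P φ
             + star (X_P φ + T φ * E) * D)) := by
    have heq : (fun t => ext (A t) (B t)) = fun t =>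
        Complex.I / 2 * ((X_P t + T t * E) * star (X_P t)
          - star (X_P t + T t * E) * X_P t) := by
      funext t
      simp only [ext, hA t, hB t, starRingEnd_apply]
    rw [heq]
    exact (((hAd.mul hXP.star).sub (hAd.star.mul hXP)).const_mul (Complex.I / 2)).deriv
  -- algebraic facts
  have fD : D = (r : ℂ) * T φ := by
    rw [hT φ, ← hD, ← hr]; field_simp
    rw [mul_div_assoc, div_self (Complex.ofReal_ne_zero.mpr hr0), mul_one]
  have fDD : star D * D = ((r:ℂ))^2 := by
    rw [mul_comm, Complex.star_def, Complex.mul_conj, Complex.normSq_eq_norm_sq, ← hr]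
    push_cast; ring
  have fTT : star (T φ) * T φ = 1 := by
    have h1 : star (T φ) * T φ = star D * D / ((r:ℂ))^2 := by
      rw [hT φ, ← hD, ← hr]
      simp only [Complex.star_def, map_div₀, Complex.conj_ofReal]
      ring
    rw [h1, fDD]
    exact div_self (pow_ne_zero 2 (Complex.ofReal_ne_zero.mpr hr0))
  have hconjE : star E = Complex.exp (-((ε:ℂ) * α * Complex.I)) := by
    rw [hE, Complex.star_def, ← Complex.exp_conj]
    congr 1
    simp [Complex.conj_I]
  have fEE : star E * E = 1 := by
    rw [hconjE, hE, ← Complex.exp_add]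
    simp
  have fEs : E - star E = 2 * Complex.I * (ε:ℂ) * (Real.sin α : ℂ) := by
    have h1 : (ε:ℂ) * α * Complex.I = ((ε*α : ℝ):ℂ) * Complex.I := by push_cast; ring
    rw [hconjE, hE, h1, ← neg_mul, ← Complex.ofReal_neg, Complex.exp_mul_I, Complex.exp_mul_I]
    rw [← Complex.ofReal_sin, ← Complex.ofReal_cos, ← Complex.ofReal_sin, ← Complex.ofReal_cos]
    rw [Real.sin_neg, Real.cos_neg]
    have h3 : Real.sin (ε*α) = ε * Real.sin α := by
      rcases hε with h | h <;> simp [h, Real.sin_neg]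
    rw [h3]; push_cast; ring
  have fs : ((Real.sin α / κ φ : ℝ):ℂ) * (h φ : ℂ) = (Real.sin α : ℂ) * (r:ℂ) := by
    have hk : κ φ = h φ / r := by rw [hκ φ, ← hD, ← hr]
    have hre : (Real.sin α / κ φ) * h φ = Real.sin α * r := by
      rw [hk]; field_simp
      rw [mul_div_assoc, div_self (hh φ), mul_one]
    exact_mod_cast congrArg Complex.ofReal hre
  -- rewrite the goal
  have hA0 : A φ - B φ = T φ * E := by rw [hA φ, hB φ]; ring
  rw [hdAB, hdext, hA0, hA φ, hB φ, fD]
  simp only [ext, Complex.star_def, map_mul, map_add, Complex.conj_I,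
    Complex.conj_ofReal]
  simp only [Complex.star_def] at fTT fEE fEs
  have hcne : ((h φ : ℝ):ℂ) ≠ 0 := Complex.ofReal_ne_zero.mpr (hh φ)
  constructor
  · rintro ⟨e1, e2⟩
    have key : ((h φ : ℝ):ℂ) * ((starRingEnd ℂ) (T φ) * (starRingEnd ℂ) E * (X - X_P φ)) =
        ((h φ : ℝ):ℂ) * ((ε:ℂ) * ((Real.sin α / κ φ : ℝ):ℂ)) := by
      linear_combination (Complex.I * ((h φ : ℝ):ℂ)) * e1 - e2
        - (Complex.I/2) * ((r:ℝ):ℂ) * (E - (starRingEnd ℂ) E) * fTT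
        - (Complex.I/2) * ((r:ℝ):ℂ) * fEs - ((ε:ℝ):ℂ) * fs
        + (((h φ : ℝ):ℂ) * (starRingEnd ℂ) (T φ) * (starRingEnd ℂ) E * (X - X_P φ)
            - ((r:ℝ):ℂ) * ((ε:ℝ):ℂ) * ((Real.sin α:ℝ):ℂ)) * Complex.I_sq
    have key2 : (starRingEnd ℂ) (T φ) * (starRingEnd ℂ) E * (X - X_P φ) =
        (ε:ℂ) * ((Real.sin α / κ φ : ℝ):ℂ) := mul_left_cancel₀ hcne key
    linear_combination (T φ * E) * key2 - (X - X_P φ) * fTT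
      - ((starRingEnd ℂ) (T φ) * T φ * (X - X_P φ)) * fEE
  · intro hX
    subst hX
    simp only [map_add, map_mul, Complex.conj_ofReal]
    constructor
    · ring
    · linear_combination (-(ε:ℂ) * (T φ) * (starRingEnd ℂ) (T φ) * E * (starRingEnd ℂ) E) * fs
        - (Complex.I/2) * ((r:ℝ):ℂ) * (T φ) * (starRingEnd ℂ) (T φ) * fEs
        - ((ε:ℂ) * ((Real.sin α:ℝ):ℂ) * ((r:ℝ):ℂ) * (T φ) * (starRingEnd ℂ) (T φ)) * fEE
        + (((h φ : ℝ):ℂ) * T φ * E * (ε:ℂ) * ((Real.sin α / κ φ : ℝ):ℂ) * (starRingEnd ℂ) (T φ)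
              * (starRingEnd ℂ) E
            - T φ * (ε:ℂ) * (starRingEnd ℂ) (T φ) * ((Real.sin α:ℝ):ℂ) * ((r:ℝ):ℂ)) * Complex.I_sq
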